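/- Let n ≥ 2, 0 < q < n−1 < 2n−1 < p+1, β > 0 and g(s) = s|s|^p e^{|s|^β}, G its primitive. Define ρ(s) = ((2n+q)/(2n(q+1))) g(s)s − G(s) − (1/(2n(q+1))) g'(s)s². Then ρ(s) ≤ 0 for all s ≥ 0. -/

import Mathlib

theorem stmt17 (n : ℕ) (p q β : ℝ) (hn : 2 ≤ n)
    (hq : 0 < q) (hq' : q < (n:ℝ) - 1) (hp : 2 * (n:ℝ) - 1 < p + 1) (hβ : 0 < β)
    (g g' G ρ : ℝ → ℝ)
    (hg : ∀ s ≥ (0:ℝ), g s = s ^ (p + 1) * Real.exp (s ^ β))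
    (hg' : ∀ s ≥ (0:ℝ), g' s = (p + 1 + β * s ^ β) * s ^ p * Real.exp (s ^ β))
    (hG : ∀ s, G s = ∫ τ in (0:ℝ)..s, g τ)
    (hρ : ∀ s ≥ (0:ℝ), ρ s = (2 * (n:ℝ) + q) / (2 * n * (q + 1)) * g s * s - G s
        - 1 / (2 * n * (q + 1)) * g' s * s ^ 2) :
    ∀ s ≥ (0:ℝ), ρ s ≤ 0 := by
  intro s hs
  have hn2 : (2:ℝ) ≤ (n:ℝ) := by exact_mod_cast hn
  set c : ℝ := 2 * (n:ℝ) * (q + 1) with hc_def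
  have hc : 0 < c := by positivity
  set A : ℝ := 2 * (n:ℝ) + q - p - 1 with hA_def
  have hp0 : (2:ℝ) ≤ p := by linarith
  have key1 : A * (p + 2) ≤ c := by nlinarith [sq_nonneg (p + 2 - 2 * (n:ℝ))]
  have key2 : A ≤ p + 2 := by linarith
  set f : ℝ → ℝ := fun x => x ^ (p+1) * Real.exp (x ^ β) with hf_def
  have hfcont : Continuous f :=
    (Real.continuous_rpow_const (by linarith)).mul
      ((Real.continuous_rpow_const hβ.le).rexp)
  set F : ℝ → ℝ := fun x => (∫ τ in (0:ℝ)..x, f τ)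
      - 1/c * ((A - β * x ^ β) * (x ^ (p+2) * Real.exp (x ^ β))) with hF_def
  have hFcont : Continuous F := by
    apply Continuous.sub
    · exact (intervalIntegral.continuous_primitive (fun a b => hfcont.intervalIntegrable a b) 0)
    · exact continuous_const.mul
        (((continuous_const.sub (continuous_const.mul (Real.continuous_rpow_const hβ.le))).mul
          ((Real.continuous_rpow_const (by linarith)).mul
            ((Real.continuous_rpow_const hβ.le).rexp))))
  have key : ∀ x ∈ Set.Ioo (0:ℝ) s, ∃ d, HasDerivAt F d x ∧ 0 ≤ d := by
    intro x hx
    have hx0 : 0 < x := hx.1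
    have h1 : HasDerivAt (fun y : ℝ => y ^ β) (β * x ^ (β - 1)) x :=
      Real.hasDerivAt_rpow_const (Or.inl hx0.ne')
    have h2 : HasDerivAt (fun y : ℝ => y ^ (p+2)) ((p+2) * x ^ (p+2-1)) x :=
      Real.hasDerivAt_rpow_const (Or.inl hx0.ne')
    have hexp := h1.exp
    have hlin : HasDerivAt (fun y : ℝ => A - β * y ^ β) (0 - β * (β * x ^ (β-1))) x :=
      (hasDerivAt_const x A).sub (h1.const_mul β)
    have hmul := h2.mul hexp
    have hφd := (hlin.mul hmul).const_mul (1/c)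
    have hI : HasDerivAt (fun y : ℝ => ∫ τ in (0:ℝ)..y, f τ) (f x) x :=
      (hfcont.integral_hasStrictDerivAt 0 x).hasDerivAt
    refine ⟨_, hI.sub hφd, ?_⟩
    -- show 0 ≤ f x - deriv of φ
    have ht : 0 ≤ x ^ β := Real.rpow_nonneg hx0.le β
    have hu : 0 ≤ x ^ (p+1) := Real.rpow_nonneg hx0.le (p+1)
    have hE : 0 < Real.exp (x ^ β) := Real.exp_pos _
    have e1 : x ^ (p+2) = x ^ (p+1) * x := by
      rw [show (p+2:ℝ) = (p+1) + 1 by ring, Real.rpow_add hx0, Real.rpow_one]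
    have e2 : x ^ (β - 1) = x ^ β * x⁻¹ := by
      rw [Real.rpow_sub hx0, Real.rpow_one, div_eq_mul_inv]
    have e3 : x ^ (p+2-1) = x ^ (p+1) := by rw [show (p+2-1:ℝ) = p+1 by ring]
    have heq : (1/c) * ((0 - β * (β * x ^ (β-1))) * (x ^ (p+2) * Real.exp (x ^ β))
        + (A - β * x ^ β) * ((p+2) * x ^ (p+2-1) * Real.exp (x ^ β)
          + x ^ (p+2) * (Real.exp (x ^ β) * (β * x ^ (β-1)))))
        = 1/c * (A*(p+2) + (A-p-2-β)*(β*x^β) - β^2*(x^β)^2) * (x ^ (p+1) * Real.exp (x ^ β)) := by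
      rw [e1, e2, e3]
      field_simp
      ring
    simp only [Pi.mul_apply]
    rw [heq]
    have hinner : A*(p+2) + (A-p-2-β)*(β*x^β) - β^2*(x^β)^2 ≤ c := by
      nlinarith [mul_nonneg hβ.le ht, sq_nonneg (β * x^β)]
    have h4 : 1/c * (A*(p+2) + (A-p-2-β)*(β*x^β) - β^2*(x^β)^2) ≤ 1 := by
      rw [one_div, inv_mul_le_iff₀ hc]
      linarith
    have h5 : 1/c * (A*(p+2) + (A-p-2-β)*(β*x^β) - β^2*(x^β)^2) * (x ^ (p+1) * Real.exp (x ^ β))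
        ≤ 1 * (x ^ (p+1) * Real.exp (x ^ β)) :=
      mul_le_mul_of_nonneg_right h4 (mul_nonneg hu hE.le)
    simp only [one_mul] at h5
    simp only [hf_def, sub_nonneg]
    exact h5
  have hmono : MonotoneOn F (Set.Icc 0 s) := by
    apply monotoneOn_of_deriv_nonneg (convex_Icc 0 s) hFcont.continuousOn
    · intro x hx
      rw [interior_Icc] at hx
      obtain ⟨d, hd, _⟩ := key x hx
      exact hd.differentiableAt.differentiableWithinAt
    · intro x hx
      rw [interior_Icc] at hx
      obtain ⟨d, hd, hd0⟩ := key x hx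
      rw [hd.deriv]; exact hd0
  have hF0 : F 0 = 0 := by
    simp only [hF_def, intervalIntegral.integral_same]
    rw [Real.zero_rpow (by linarith : p + 2 ≠ 0)]
    ring
  have hFs : 0 ≤ F s := by
    rcases eq_or_lt_of_le hs with h | h
    · rw [← h, hF0]
    · have := hmono (Set.left_mem_Icc.mpr hs) (Set.right_mem_Icc.mpr hs) hs
      rw [hF0] at this; exact this
  -- now rewrite ρ s
  have hGs : G s = ∫ τ in (0:ℝ)..s, f τ := by
    rw [hG]
    apply intervalIntegral.integral_congr
    intro τ hτ
    rw [Set.uIcc_of_le hs] at hτ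
    exact hg τ hτ.1
  have e1 : s ^ (p+2) = s ^ (p+1) * s := by
    rcases eq_or_lt_of_le hs with h | h
    · rw [← h, Real.zero_rpow (by linarith : p + 2 ≠ 0),
        Real.zero_rpow (by linarith : p + 1 ≠ 0)]; ring
    · rw [show (p+2:ℝ) = (p+1) + 1 by ring, Real.rpow_add h, Real.rpow_one]
  have e2 : s ^ p * s ^ (2:ℕ) = s ^ (p+2) := by
    rcases eq_or_lt_of_le hs with h | h
    · rw [← h, Real.zero_rpow (by linarith : p + 2 ≠ 0),
        Real.zero_rpow (by linarith : p ≠ 0)]; ring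
    · rw [show (p+2:ℝ) = p + (2:ℕ) by push_cast; ring, Real.rpow_add h, Real.rpow_natCast]
  have hρs : ρ s = 1/c * ((A - β * s ^ β) * (s ^ (p+2) * Real.exp (s ^ β))) - (∫ τ in (0:ℝ)..s, f τ) := by
    rw [hρ s hs, hg s hs, hg' s hs, hGs, e1]
    simp only [hA_def]
    have e12 : s ^ p * s ^ (2:ℕ) = s ^ (p+1) * s := e2.trans e1
    linear_combination (-(1:ℝ)/c*(p+1+β*s^β)*Real.exp (s^β)) * e12
  rw [hρs]
  have : F s = (∫ τ in (0:ℝ)..s, f τ) - 1/c * ((A - β * s ^ β) * (s ^ (p+2) * Real.exp (s ^ β))) := rfl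
  linarith [hFs, this ▸ hFs]
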